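/- Let (μ_α)_{α∈Λ} be a family of countably sub-additive, non-negative set functions on a measurable space (S,Σ). Then the set function μ̌(A) = sup over finite measurable partitions Π of A of Σ_{C∈Π} sup_{α∈Λ} μ_α(C) is countably additive, i.e. a measure on (S,Σ). -/

import Mathlib

open MeasureTheory Set Function
open scoped ENNReal NNReal

/-- The supremum set function of a family of set functions, defined on a set `A` as the
supremum over finite measurable partitions `Π` of `A` of `∑_{C ∈ Π} ⨆ α, μ α C`. -/
noncomputable def partitionSup {S : Type*} [MeasurableSpace S] {Λ : Type*}
    (μ : Λ → Set S → ℝ≥0∞) (A : Set S) : ℝ≥0∞ :=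
  ⨆ (P : Finset (Set S)) (_ : (∀ C ∈ P, MeasurableSet C) ∧
      (P : Set (Set S)).PairwiseDisjoint id ∧ ⋃₀ (P : Set (Set S)) = A),
    ∑ C ∈ P, ⨆ α, μ α C

namespace PSAux

variable {S : Type*} [MeasurableSpace S] {Λ : Type*}

/-- `P` is a finite measurable partition of `A`. -/
def IsPart (P : Finset (Set S)) (A : Set S) : Prop :=
  (∀ C ∈ P, MeasurableSet C) ∧
    (P : Set (Set S)).PairwiseDisjoint id ∧ ⋃₀ (P : Set (Set S)) = A

lemma partitionSup_eq (μ : Λ → Set S → ℝ≥0∞) (A : Set S) :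
    partitionSup μ A = ⨆ (P : Finset (Set S)) (_ : IsPart P A), ∑ C ∈ P, ⨆ α, μ α C := rfl

lemma le_pS (μ : Λ → Set S → ℝ≥0∞) {P : Finset (Set S)} {A : Set S} (h : IsPart P A) :
    ∑ C ∈ P, ⨆ α, μ α C ≤ partitionSup μ A := by
  rw [partitionSup_eq]
  exact le_iSup₂ (f := fun (P : Finset (Set S)) (_ : IsPart P A) => ∑ C ∈ P, ⨆ α, μ α C) P h

lemma pS_le (μ : Λ → Set S → ℝ≥0∞) {A : Set S} {c : ℝ≥0∞}
    (h : ∀ P : Finset (Set S), IsPart P A → ∑ C ∈ P, ⨆ α, μ α C ≤ c) :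
    partitionSup μ A ≤ c := by
  rw [partitionSup_eq]; exact iSup₂_le h

lemma isPart_singleton {A : Set S} (hA : MeasurableSet A) : IsPart ({A} : Finset (Set S)) A := by
  refine ⟨by simp [hA], ?_, by simp⟩
  simp [Set.pairwiseDisjoint_singleton]

omit [MeasurableSpace S] in
lemma g_empty (μ : Λ → Set S → ℝ≥0∞) (hempty : ∀ α, μ α ∅ = 0) :
    (⨆ α, μ α ∅) = 0 := by simp [hempty]

lemma pS_empty (μ : Λ → Set S → ℝ≥0∞) (hempty : ∀ α, μ α ∅ = 0) :
    partitionSup μ ∅ = 0 := by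
  refine le_antisymm (pS_le μ fun P hP => ?_) zero_le
  have : ∀ C ∈ P, (⨆ α, μ α C) = 0 := by
    intro C hC
    have hCsub : C ⊆ ∅ := hP.2.2 ▸ Set.subset_sUnion_of_mem (by exact_mod_cast hC)
    have : C = ∅ := Set.subset_empty_iff.mp hCsub
    simp [this, hempty]
  simp [Finset.sum_eq_zero this]

lemma pS_mono (μ : Λ → Set S → ℝ≥0∞) {A B : Set S} (hA : MeasurableSet A)
    (hB : MeasurableSet B) (hAB : A ⊆ B) : partitionSup μ A ≤ partitionSup μ B := by
  classical
  refine pS_le μ fun P hP => ?_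
  obtain ⟨hPm, hPd, hPu⟩ := hP
  set Q : Finset (Set S) := insert (B \ A) P with hQ
  have hQpart : IsPart Q B := by
    refine ⟨?_, ?_, ?_⟩
    · intro C hC
      rcases Finset.mem_insert.mp hC with h | h
      · exact h ▸ hB.diff hA
      · exact hPm C h
    · have : (Q : Set (Set S)) = insert (B \ A) (P : Set (Set S)) := by simp [hQ]
      rw [this]
      refine hPd.insert fun C hC _ => ?_
      have hCsub : C ⊆ A := hPu ▸ Set.subset_sUnion_of_mem hC
      exact Set.disjoint_of_subset_right hCsub disjoint_sdiff_left
    · have : (Q : Set (Set S)) = insert (B \ A) (P : Set (Set S)) := by simp [hQ]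
      rw [this, Set.sUnion_insert, hPu, Set.diff_union_of_subset hAB]
  calc ∑ C ∈ P, ⨆ α, μ α C ≤ ∑ C ∈ Q, ⨆ α, μ α C :=
        Finset.sum_le_sum_of_subset (Finset.subset_insert _ _)
    _ ≤ partitionSup μ B := le_pS μ hQpart

lemma pS_superadd_pair (μ : Λ → Set S → ℝ≥0∞) (hempty : ∀ α, μ α ∅ = 0)
    {A B : Set S} (hA : MeasurableSet A) (hB : MeasurableSet B) (hd : Disjoint A B) :
    partitionSup μ A + partitionSup μ B ≤ partitionSup μ (A ∪ B) := by
  classical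
  have hNA : Nonempty {P : Finset (Set S) // IsPart P A} := ⟨⟨{A}, isPart_singleton hA⟩⟩
  have hNB : Nonempty {P : Finset (Set S) // IsPart P B} := ⟨⟨{B}, isPart_singleton hB⟩⟩
  rw [partitionSup_eq μ A, partitionSup_eq μ B, iSup_subtype', iSup_subtype',
    ENNReal.iSup_add]
  refine iSup_le fun ⟨P, hP⟩ => ?_
  rw [ENNReal.add_iSup]
  refine iSup_le fun ⟨Q, hQ⟩ => ?_
  obtain ⟨hPm, hPd, hPu⟩ := hP
  obtain ⟨hQm, hQd, hQu⟩ := hQ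
  have hinter : ∀ C ∈ P ∩ Q, (⨆ α, μ α C) = 0 := by
    intro C hC
    have h1 : C ⊆ A := hPu ▸ Set.subset_sUnion_of_mem (by exact_mod_cast (Finset.mem_inter.mp hC).1)
    have h2 : C ⊆ B := hQu ▸ Set.subset_sUnion_of_mem (by exact_mod_cast (Finset.mem_inter.mp hC).2)
    have : C = ∅ := by simpa using disjoint_self.mp (hd.mono h1 h2)
    simp [this, hempty]
  have hsum : ∑ C ∈ P, (⨆ α, μ α C) + ∑ C ∈ Q, (⨆ α, μ α C)
      = ∑ C ∈ P ∪ Q, (⨆ α, μ α C) := by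
    rw [← Finset.sum_union_inter, Finset.sum_eq_zero hinter, add_zero]
  rw [hsum]
  refine le_pS μ ⟨?_, ?_, ?_⟩
  · intro C hC
    rcases Finset.mem_union.mp hC with h | h
    · exact hPm C h
    · exact hQm C h
  · have : ((P ∪ Q : Finset (Set S)) : Set (Set S)) = (P : Set (Set S)) ∪ (Q : Set (Set S)) := by
      simp
    rw [this]
    refine hPd.union hQd fun C hC D hD _ => ?_
    have h1 : C ⊆ A := hPu ▸ Set.subset_sUnion_of_mem hC
    have h2 : D ⊆ B := hQu ▸ Set.subset_sUnion_of_mem hD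
    exact hd.mono h1 h2
  · have : ((P ∪ Q : Finset (Set S)) : Set (Set S)) = (P : Set (Set S)) ∪ (Q : Set (Set S)) := by
      simp
    rw [this, Set.sUnion_union, hPu, hQu]

lemma pS_superadd_finset (μ : Λ → Set S → ℝ≥0∞) (hempty : ∀ α, μ α ∅ = 0)
    (A : ℕ → Set S) (hAm : ∀ n, MeasurableSet (A n)) (hAd : Pairwise (Disjoint on A))
    (s : Finset ℕ) :
    ∑ n ∈ s, partitionSup μ (A n) ≤ partitionSup μ (⋃ n ∈ s, A n) := by
  classical
  induction s using Finset.induction_on with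
  | empty => simp [pS_empty μ hempty]
  | @insert a s ha ih =>
    rw [Finset.sum_insert ha]
    have hmeas : MeasurableSet (⋃ n ∈ s, A n) := MeasurableSet.biUnion s.countable_toSet
      (fun n _ => hAm n)
    have hdisj : Disjoint (A a) (⋃ n ∈ s, A n) := by
      refine Set.disjoint_iUnion₂_right.mpr fun n hn => hAd ?_
      rintro rfl; exact ha hn
    calc partitionSup μ (A a) + ∑ n ∈ s, partitionSup μ (A n)
        ≤ partitionSup μ (A a) + partitionSup μ (⋃ n ∈ s, A n) := by gcongr
      _ ≤ partitionSup μ (A a ∪ ⋃ n ∈ s, A n) :=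
          pS_superadd_pair μ hempty (hAm a) hmeas hdisj
      _ = partitionSup μ (⋃ n ∈ insert a s, A n) := by
          rw [Finset.set_biUnion_insert]

/-- The key restriction lemma: restricting a partition of a superset to `A` gives at most
`partitionSup μ A`. -/
lemma sum_inter_le (μ : Λ → Set S → ℝ≥0∞) (hempty : ∀ α, μ α ∅ = 0)
    {P : Finset (Set S)} {T A : Set S}
    (hP : IsPart P T) (hA : MeasurableSet A) (hAT : A ⊆ T) :
    ∑ C ∈ P, (⨆ α, μ α (C ∩ A)) ≤ partitionSup μ A := by
  classical
  obtain ⟨hPm, hPd, hPu⟩ := hP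
  set P' : Finset (Set S) := P.filter (fun C => (C ∩ A).Nonempty) with hP'
  have hsum : ∑ C ∈ P, (⨆ α, μ α (C ∩ A)) = ∑ C ∈ P', (⨆ α, μ α (C ∩ A)) := by
    refine (Finset.sum_subset (Finset.filter_subset _ _) fun C hC hC' => ?_).symm
    have : C ∩ A = ∅ := by
      by_contra h
      exact hC' (Finset.mem_filter.mpr ⟨hC, Set.nonempty_iff_ne_empty.mpr h⟩)
    simp [this, hempty]
  have hinj : Set.InjOn (fun C => C ∩ A) P' := by
    intro C hC D hD hCD
    have hCne : (C ∩ A).Nonempty := (Finset.mem_filter.mp hC).2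
    by_contra hne
    have hdisj : Disjoint C D := hPd (by exact_mod_cast (Finset.mem_filter.mp hC).1)
      (by exact_mod_cast (Finset.mem_filter.mp hD).1) hne
    obtain ⟨x, hx⟩ := hCne
    have hxD : x ∈ D ∩ A := by
      have h : C ∩ A = D ∩ A := hCD
      rw [← h]; exact hx
    exact Set.disjoint_left.mp hdisj hx.1 hxD.1
  have himg : ∑ C ∈ P', (⨆ α, μ α (C ∩ A))
      = ∑ D ∈ P'.image (fun C => C ∩ A), (⨆ α, μ α D) :=
    (Finset.sum_image (f := fun D => ⨆ α, μ α D) fun C hC D hD h => hinj hC hD h).symm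
  rw [hsum, himg]
  refine le_pS μ ⟨?_, ?_, ?_⟩
  · intro D hD
    obtain ⟨C, hC, rfl⟩ := Finset.mem_image.mp hD
    exact (hPm C (Finset.mem_filter.mp hC).1).inter hA
  · intro D1 hD1 D2 hD2 hne
    obtain ⟨C1, hC1, rfl⟩ := Finset.mem_image.mp (by exact_mod_cast hD1)
    obtain ⟨C2, hC2, rfl⟩ := Finset.mem_image.mp (by exact_mod_cast hD2)
    have hCne : C1 ≠ C2 := fun h => hne (by rw [h])
    have hdisj : Disjoint C1 C2 := hPd (by exact_mod_cast (Finset.mem_filter.mp hC1).1)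
      (by exact_mod_cast (Finset.mem_filter.mp hC2).1) hCne
    exact (hdisj.mono Set.inter_subset_left Set.inter_subset_left : Disjoint _ _)
  · apply Set.Subset.antisymm
    · rintro x ⟨D, hD, hx⟩
      obtain ⟨C, hC, rfl⟩ := Finset.mem_image.mp (by exact_mod_cast hD)
      exact hx.2
    · intro x hx
      have hxT : x ∈ T := hAT hx
      rw [← hPu] at hxT
      obtain ⟨C, hC, hxC⟩ := hxT
      refine ⟨C ∩ A, ?_, hxC, hx⟩
      have : C ∈ P' := Finset.mem_filter.mpr ⟨by exact_mod_cast hC, ⟨x, hxC, hx⟩⟩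
      exact_mod_cast Finset.mem_image_of_mem _ this

end PSAux

/-- If each member of a family of non-negative set functions `μ α` is countably
sub-additive (and vanishes on `∅`), then the supremum set function `partitionSup μ`
is countably additive on measurable sets, i.e. it is a measure on `(S, Σ)`. -/
theorem stmt1 {S : Type*} [MeasurableSpace S] {Λ : Type*} (μ : Λ → Set S → ℝ≥0∞)
    (hempty : ∀ α, μ α ∅ = 0)
    (hsub : ∀ α (A : ℕ → Set S), (∀ n, MeasurableSet (A n)) →
      μ α (⋃ n, A n) ≤ ∑' n, μ α (A n)) :
    partitionSup μ ∅ = 0 ∧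
    ∀ (A : ℕ → Set S), (∀ n, MeasurableSet (A n)) → Pairwise (Disjoint on A) →
      partitionSup μ (⋃ n, A n) = ∑' n, partitionSup μ (A n) := by
  refine ⟨PSAux.pS_empty μ hempty, fun A hAm hAd => ?_⟩
  have hUm : MeasurableSet (⋃ n, A n) := MeasurableSet.iUnion hAm
  refine le_antisymm ?_ ?_
  · -- subadditivity
    refine PSAux.pS_le μ fun P hP => ?_
    have step1 : ∀ C ∈ P, (⨆ α, μ α C) ≤ ∑' n, ⨆ α, μ α (C ∩ A n) := by
      intro C hC
      refine iSup_le fun α => ?_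
      have hCU : C ⊆ ⋃ n, A n := hP.2.2 ▸ Set.subset_sUnion_of_mem (by exact_mod_cast hC)
      have hCeq : C = ⋃ n, C ∩ A n := by
        rw [← Set.inter_iUnion]; exact (Set.inter_eq_left.mpr hCU).symm
      calc μ α C = μ α (⋃ n, C ∩ A n) := by rw [← hCeq]
        _ ≤ ∑' n, μ α (C ∩ A n) := hsub α _ fun n => (hP.1 C hC).inter (hAm n)
        _ ≤ ∑' n, ⨆ β, μ β (C ∩ A n) := ENNReal.tsum_le_tsum fun n => le_iSup (fun β => μ β (C ∩ A n)) α
    calc ∑ C ∈ P, (⨆ α, μ α C) ≤ ∑ C ∈ P, ∑' n, ⨆ α, μ α (C ∩ A n) :=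
          Finset.sum_le_sum step1
      _ = ∑' n, ∑ C ∈ P, ⨆ α, μ α (C ∩ A n) :=
          (Summable.tsum_finsetSum fun C _ => ENNReal.summable).symm
      _ ≤ ∑' n, partitionSup μ (A n) :=
          ENNReal.tsum_le_tsum fun n =>
            PSAux.sum_inter_le μ hempty hP (hAm n) (Set.subset_iUnion A n)
  · -- superadditivity
    rw [ENNReal.tsum_eq_iSup_sum]
    refine iSup_le fun s => ?_
    calc ∑ n ∈ s, partitionSup μ (A n) ≤ partitionSup μ (⋃ n ∈ s, A n) :=
          PSAux.pS_superadd_finset μ hempty A hAm hAd s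
      _ ≤ partitionSup μ (⋃ n, A n) :=
          PSAux.pS_mono μ (MeasurableSet.biUnion s.countable_toSet fun n _ => hAm n) hUm
            (Set.iUnion₂_subset fun n _ => Set.subset_iUnion A n)
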